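/- Let A be an n×n Hermitian complex matrix, v ∈ ℂⁿ, and let ρ : ℝ → ℝ be nondecreasing and bounded. Then (i) the function s ↦ ∑_{i=1}^n ρ(λ_i(A + s·v v*)) is nondecreasing on ℝ, and (ii) for all real s ≤ s', ∑_{i=1}^n ρ(λ_i(A + s'·v v*)) − ∑_{i=1}^n ρ(λ_i(A + s·v v*)) ≤ sup ρ − inf ρ. -/

import Mathlib

open Matrix

open Finset

local notation "⟪" x ", " y "⟫" => @inner ℂ _ _ x y

namespace MonotoneRankOne

variable {n : ℕ}

/-! ### Combinatorial part -/

noncomputable def cnt (f : Fin n → ℝ) (t : ℝ) : ℕ :=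
  (Finset.univ.filter (fun i => t < f i)).card

lemma cnt_comp_perm (f : Fin n → ℝ) (σ : Equiv.Perm (Fin n)) (t : ℝ) :
    cnt (f ∘ σ) t = cnt f t := by
  unfold cnt
  apply Finset.card_bij (fun i _ => σ i)
  · intro a ha
    simp only [Finset.mem_filter, Finset.mem_univ, true_and] at ha ⊢
    exact ha
  · intro a _ b _ h
    exact σ.injective h
  · intro b hb
    refine ⟨σ.symm b, ?_, by simp⟩
    simp only [Finset.mem_filter, Finset.mem_univ, true_and, Function.comp_apply,
      Equiv.apply_symm_apply] at hb ⊢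
    exact hb

lemma sorted_le (f g : Fin n → ℝ) (hf : Monotone f) (hg : Monotone g)
    (h : ∀ t, cnt f t ≤ cnt g t) : ∀ i, f i ≤ g i := by
  intro i
  by_contra hc
  push_neg at hc
  set t := g i with ht
  have h1 : Finset.Ici i ⊆ Finset.univ.filter (fun j => t < f j) := by
    intro j hj
    simp only [Finset.mem_Ici] at hj
    simp only [Finset.mem_filter, Finset.mem_univ, true_and]
    exact lt_of_lt_of_le hc (hf hj)
  have h2 : Finset.univ.filter (fun j => t < g j) ⊆ Finset.Ioi i := by
    intro j hj
    simp only [Finset.mem_filter, Finset.mem_univ, true_and] at hj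
    simp only [Finset.mem_Ioi]
    by_contra hji
    push_neg at hji
    exact absurd (hg hji) (not_le.mpr hj)
  have c1 : (Finset.Ici i).card ≤ cnt f t := Finset.card_le_card h1
  have c2 : cnt g t ≤ (Finset.Ioi i).card := Finset.card_le_card h2
  have := (c1.trans (h t)).trans c2
  rw [Fin.card_Ici, Fin.card_Ioi] at this
  have := i.isLt
  omega

lemma sorted_interlace {m : ℕ} (f g : Fin (m+1) → ℝ) (hf : Monotone f) (hg : Monotone g)
    (h : ∀ t, cnt g t ≤ cnt f t + 1) : ∀ i : Fin m, g i.castSucc ≤ f i.succ := by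
  intro i
  by_contra hc
  push_neg at hc
  set t := f i.succ with ht
  have h1 : Finset.Ici i.castSucc ⊆ Finset.univ.filter (fun j => t < g j) := by
    intro j hj
    simp only [Finset.mem_Ici] at hj
    simp only [Finset.mem_filter, Finset.mem_univ, true_and]
    exact lt_of_lt_of_le hc (hg hj)
  have h2 : Finset.univ.filter (fun j => t < f j) ⊆ Finset.Ioi i.succ := by
    intro j hj
    simp only [Finset.mem_filter, Finset.mem_univ, true_and] at hj
    simp only [Finset.mem_Ioi]
    by_contra hji
    push_neg at hji
    exact absurd (hf hji) (not_le.mpr hj)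
  have c1 : (Finset.Ici i.castSucc).card ≤ cnt g t := Finset.card_le_card h1
  have c2 : cnt f t ≤ (Finset.Ioi i.succ).card := Finset.card_le_card h2
  have := (c1.trans (h t)).trans (by omega : cnt f t + 1 ≤ (Finset.Ioi i.succ).card + 1)
  rw [Fin.card_Ici, Fin.card_Ioi] at this
  have hi1 : (i.castSucc : ℕ) = (i : ℕ) := rfl
  have hi2 : (i.succ : ℕ) = (i : ℕ) + 1 := rfl
  have := i.isLt
  omega

lemma sum_rho_comparison (ρ : ℝ → ℝ) (hmono : Monotone ρ)
    (hbdd_above : BddAbove (Set.range ρ)) (hbdd_below : BddBelow (Set.range ρ))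
    (f g : Fin n → ℝ)
    (h1 : ∀ t, cnt f t ≤ cnt g t) (h2 : ∀ t, cnt g t ≤ cnt f t + 1) :
    (∑ i, ρ (f i) ≤ ∑ i, ρ (g i)) ∧
    (∑ i, ρ (g i)) - (∑ i, ρ (f i)) ≤ sSup (Set.range ρ) - sInf (Set.range ρ) := by
  set f' := f ∘ Tuple.sort f with hf'
  set g' := g ∘ Tuple.sort g with hg'
  have hmf : Monotone f' := Tuple.monotone_sort f
  have hmg : Monotone g' := Tuple.monotone_sort g
  have hc1 : ∀ t, cnt f' t ≤ cnt g' t := fun t => by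
    rw [hf', hg', cnt_comp_perm, cnt_comp_perm]; exact h1 t
  have hc2 : ∀ t, cnt g' t ≤ cnt f' t + 1 := fun t => by
    rw [hf', hg', cnt_comp_perm, cnt_comp_perm]; exact h2 t
  have hle := sorted_le f' g' hmf hmg hc1
  have hsumf : ∑ i, ρ (f' i) = ∑ i, ρ (f i) := Equiv.sum_comp (Tuple.sort f) (fun i => ρ (f i))
  have hsumg : ∑ i, ρ (g' i) = ∑ i, ρ (g i) := Equiv.sum_comp (Tuple.sort g) (fun i => ρ (g i))
  have hinf_le_sup : sInf (Set.range ρ) ≤ sSup (Set.range ρ) :=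
    (csInf_le hbdd_below ⟨0, rfl⟩).trans (le_csSup hbdd_above ⟨0, rfl⟩)
  constructor
  · rw [← hsumf, ← hsumg]
    exact Finset.sum_le_sum fun i _ => hmono (hle i)
  · rw [← hsumf, ← hsumg]
    cases n with
    | zero => simpa using by linarith
    | succ m =>
      have hint := sorted_interlace f' g' hmf hmg hc2
      rw [Fin.sum_univ_castSucc (f := fun i => ρ (g' i)),
          Fin.sum_univ_succ (f := fun i => ρ (f' i))]
      have hA : ∑ i : Fin m, ρ (g' i.castSucc) ≤ ∑ i : Fin m, ρ (f' i.succ) :=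
        Finset.sum_le_sum fun i _ => hmono (hint i)
      have hB : ρ (g' (Fin.last m)) ≤ sSup (Set.range ρ) := le_csSup hbdd_above ⟨_, rfl⟩
      have hC : sInf (Set.range ρ) ≤ ρ (f' 0) := csInf_le hbdd_below ⟨_, rfl⟩
      linarith

/-! ### Quadratic forms -/

noncomputable def Q (M : Matrix (Fin n) (Fin n) ℂ) (x : EuclideanSpace ℂ (Fin n)) : ℝ :=
  (⟪x, Matrix.toEuclideanLin M x⟫).re

noncomputable def En (x : EuclideanSpace ℂ (Fin n)) : ℝ := (⟪x, x⟫).re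

lemma En_pos (x : EuclideanSpace ℂ (Fin n)) (hx : x ≠ 0) : 0 < En x := by
  by_contra h
  push_neg at h
  exact hx ((re_inner_self_nonpos (𝕜 := ℂ)).mp h)

lemma tEL_eigen (M : Matrix (Fin n) (Fin n) ℂ) (hM : M.IsHermitian) (j : Fin n) :
    Matrix.toEuclideanLin M (hM.eigenvectorBasis j) =
      (hM.eigenvalues j : ℂ) • (hM.eigenvectorBasis j) := by
  apply (WithLp.equiv 2 (Fin n → ℂ)).injective
  change M *ᵥ WithLp.ofLp (hM.eigenvectorBasis j) = _
  have := hM.mulVec_eigenvectorBasis j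
  simpa using this

lemma En_eq_sum (x : EuclideanSpace ℂ (Fin n))
    (b : OrthonormalBasis (Fin n) ℂ (EuclideanSpace ℂ (Fin n))) :
    En x = ∑ j, Complex.normSq ⟪b j, x⟫ := by
  rw [En, ← b.sum_inner_mul_inner x x, Complex.re_sum]
  exact Finset.sum_congr rfl fun j _ => by
    rw [← inner_conj_symm x (b j), mul_comm, Complex.mul_conj]
    simp

lemma Q_eq_sum (M : Matrix (Fin n) (Fin n) ℂ) (hM : M.IsHermitian)
    (x : EuclideanSpace ℂ (Fin n)) :
    Q M x = ∑ j, hM.eigenvalues j * Complex.normSq ⟪hM.eigenvectorBasis j, x⟫ := by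
  set b := hM.eigenvectorBasis with hb
  rw [Q, ← b.sum_inner_mul_inner x (Matrix.toEuclideanLin M x), Complex.re_sum]
  refine Finset.sum_congr rfl fun j _ => ?_
  have hsym : (Matrix.toEuclideanLin M).IsSymmetric :=
    (Matrix.isHermitian_iff_isSymmetric).mp hM
  have h1 : ⟪b j, Matrix.toEuclideanLin M x⟫ = (hM.eigenvalues j : ℂ) * ⟪b j, x⟫ := by
    rw [← hsym (b j) x, tEL_eigen M hM j, inner_smul_left]
    simp [Complex.conj_ofReal, hb]
  rw [h1, ← inner_conj_symm x (b j)]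
  have : (starRingEnd ℂ) ⟪b j, x⟫ * ((hM.eigenvalues j : ℂ) * ⟪b j, x⟫)
      = (hM.eigenvalues j : ℂ) * ((starRingEnd ℂ) ⟪b j, x⟫ * ⟪b j, x⟫) := by ring
  rw [this, mul_comm ((starRingEnd ℂ) ⟪b j, x⟫), Complex.mul_conj]
  simp

/-! ### Spans of eigenvectors -/

lemma inner_eq_zero_of_mem_span (b : OrthonormalBasis (Fin n) ℂ (EuclideanSpace ℂ (Fin n)))
    (S : Set (Fin n)) (x : EuclideanSpace ℂ (Fin n))
    (hx : x ∈ Submodule.span ℂ (⇑b '' S)) {j : Fin n} (hj : j ∉ S) :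
    ⟪b j, x⟫ = 0 := by
  induction hx using Submodule.span_induction with
  | mem y hy =>
    obtain ⟨k, hk, rfl⟩ := hy
    exact b.orthonormal.2 (fun h => hj (h ▸ hk))
  | zero => exact inner_zero_right _
  | add y z _ _ hy hz => rw [inner_add_right, hy, hz, add_zero]
  | smul c y _ hy => rw [inner_smul_right, hy, mul_zero]

lemma finrank_span_basis_image (b : OrthonormalBasis (Fin n) ℂ (EuclideanSpace ℂ (Fin n)))
    (S : Finset (Fin n)) :
    Module.finrank ℂ (Submodule.span ℂ (⇑b '' ↑S)) = S.card := by
  have li : LinearIndependent ℂ (fun i : ↥(↑S : Set (Fin n)) => b i) :=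
    b.orthonormal.linearIndependent.comp _ Subtype.val_injective
  have hrange : Set.range (fun i : ↥(↑S : Set (Fin n)) => b i) = ⇑b '' ↑S := by
    rw [← Set.image_eq_range]
  rw [← hrange, finrank_span_eq_card li]
  simp

lemma span_quad_gt (M : Matrix (Fin n) (Fin n) ℂ) (hM : M.IsHermitian) (t : ℝ)
    (S : Finset (Fin n)) (hS : ∀ j ∈ S, t < hM.eigenvalues j)
    (x : EuclideanSpace ℂ (Fin n))
    (hx : x ∈ Submodule.span ℂ (⇑hM.eigenvectorBasis '' ↑S)) (hx0 : x ≠ 0) :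
    t * En x < Q M x := by
  set b := hM.eigenvectorBasis with hb
  have hEx : 0 < En x := En_pos x hx0
  rw [Q_eq_sum M hM x, En_eq_sum x b, Finset.mul_sum]
  have hzero : ∀ j ∉ S, Complex.normSq ⟪b j, x⟫ = 0 := fun j hj => by
    rw [inner_eq_zero_of_mem_span b ↑S x hx (by simpa using hj)]; simp
  have hex : ∃ j, Complex.normSq ⟪b j, x⟫ ≠ 0 := by
    by_contra hc
    push_neg at hc
    rw [En_eq_sum x b] at hEx
    simp only [hc] at hEx
    simp at hEx
  obtain ⟨j0, hj0⟩ := hex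
  have hj0S : j0 ∈ S := by
    by_contra hc
    exact hj0 (hzero j0 hc)
  apply Finset.sum_lt_sum
  · intro j _
    by_cases hj : j ∈ S
    · exact mul_le_mul_of_nonneg_right (le_of_lt (hS j hj)) (Complex.normSq_nonneg _)
    · rw [hzero j hj]; simp
  · refine ⟨j0, Finset.mem_univ j0, ?_⟩
    have h1 : 0 < Complex.normSq ⟪b j0, x⟫ := lt_of_le_of_ne (Complex.normSq_nonneg _)
      (Ne.symm hj0)
    exact mul_lt_mul_of_pos_right (hS j0 hj0S) h1

lemma span_quad_le (M : Matrix (Fin n) (Fin n) ℂ) (hM : M.IsHermitian) (t : ℝ)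
    (S : Finset (Fin n)) (hS : ∀ j ∈ S, hM.eigenvalues j ≤ t)
    (x : EuclideanSpace ℂ (Fin n))
    (hx : x ∈ Submodule.span ℂ (⇑hM.eigenvectorBasis '' ↑S)) :
    Q M x ≤ t * En x := by
  set b := hM.eigenvectorBasis with hb
  rw [Q_eq_sum M hM x, En_eq_sum x b, Finset.mul_sum]
  apply Finset.sum_le_sum
  intro j _
  by_cases hj : j ∈ S
  · exact mul_le_mul_of_nonneg_right (hS j hj) (Complex.normSq_nonneg _)
  · rw [inner_eq_zero_of_mem_span b ↑S x hx (by simpa using hj)]; simp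

/-! ### Dimension counting -/

lemma finrank_inf_ge (W U : Submodule ℂ (EuclideanSpace ℂ (Fin n))) :
    Module.finrank ℂ W + Module.finrank ℂ U ≤ n + Module.finrank ℂ ↥(W ⊓ U) := by
  have h := Submodule.finrank_sup_add_finrank_inf_eq W U
  have h2 : Module.finrank ℂ ↥(W ⊔ U) ≤ n := by
    have := Submodule.finrank_le (W ⊔ U)
    simpa using this
  omega

lemma exists_ne_zero_of_finrank_pos {p : Submodule ℂ (EuclideanSpace ℂ (Fin n))}
    (h : 0 < Module.finrank ℂ p) : ∃ x ∈ p, x ≠ 0 := by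
  apply Submodule.exists_mem_ne_zero_of_ne_bot
  intro hb
  rw [hb] at h
  simp at h

/-! ### Eigenvalue counting inequalities -/

lemma cnt_le_of_quad_le (M N : Matrix (Fin n) (Fin n) ℂ)
    (hM : M.IsHermitian) (hN : N.IsHermitian)
    (hQ : ∀ x, Q M x ≤ Q N x) (t : ℝ) :
    cnt hM.eigenvalues t ≤ cnt hN.eigenvalues t := by
  by_contra hc
  push_neg at hc
  set S := Finset.univ.filter (fun i => t < hM.eigenvalues i) with hSdef
  set Tc := Finset.univ.filter (fun i => ¬ t < hN.eigenvalues i) with hTcdef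
  have hcard : (Finset.univ.filter (fun i => t < hN.eigenvalues i)).card + Tc.card = n := by
    rw [hTcdef]
    rw [Finset.card_filter_add_card_filter_not]
    simp
  have e1 : cnt hM.eigenvalues t = S.card := rfl
  have e2 : cnt hN.eigenvalues t = (Finset.univ.filter (fun i => t < hN.eigenvalues i)).card := rfl
  have hsum : n + 1 ≤ S.card + Tc.card := by omega
  set W := Submodule.span ℂ (⇑hM.eigenvectorBasis '' ↑S)
  set U := Submodule.span ℂ (⇑hN.eigenvectorBasis '' ↑Tc)
  have hfW : Module.finrank ℂ W = S.card := finrank_span_basis_image _ S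
  have hfU : Module.finrank ℂ U = Tc.card := finrank_span_basis_image _ Tc
  have hpos : 0 < Module.finrank ℂ ↥(W ⊓ U) := by
    have := finrank_inf_ge W U
    omega
  obtain ⟨x, hxWU, hx0⟩ := exists_ne_zero_of_finrank_pos hpos
  have hxW : x ∈ W := hxWU.1
  have hxU : x ∈ U := hxWU.2
  have h1 : t * En x < Q M x :=
    span_quad_gt M hM t S (fun j hj => by simpa [hSdef] using hj) x hxW hx0
  have h2 : Q N x ≤ t * En x :=
    span_quad_le N hN t Tc (fun j hj => by
      have := Finset.mem_filter.mp hj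
      exact le_of_not_gt this.2) x hxU
  linarith [hQ x]

lemma cnt_le_succ_of_quad_eq (M N : Matrix (Fin n) (Fin n) ℂ)
    (hM : M.IsHermitian) (hN : N.IsHermitian) (w : EuclideanSpace ℂ (Fin n))
    (hQeq : ∀ x, ⟪w, x⟫ = 0 → Q N x ≤ Q M x) (t : ℝ) :
    cnt hN.eigenvalues t ≤ cnt hM.eigenvalues t + 1 := by
  by_contra hc
  push_neg at hc
  set S := Finset.univ.filter (fun i => t < hN.eigenvalues i) with hSdef
  set Tc := Finset.univ.filter (fun i => ¬ t < hM.eigenvalues i) with hTcdef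
  have hcard : (Finset.univ.filter (fun i => t < hM.eigenvalues i)).card + Tc.card = n := by
    rw [hTcdef, Finset.card_filter_add_card_filter_not]
    simp
  have e1 : cnt hN.eigenvalues t = S.card := rfl
  have e2 : cnt hM.eigenvalues t = (Finset.univ.filter (fun i => t < hM.eigenvalues i)).card := rfl
  have hsum : n + 2 ≤ S.card + Tc.card := by omega
  set W := Submodule.span ℂ (⇑hN.eigenvectorBasis '' ↑S)
  set U := Submodule.span ℂ (⇑hM.eigenvectorBasis '' ↑Tc)
  set K := (ℂ ∙ w)ᗮ
  have hfW : Module.finrank ℂ W = S.card := finrank_span_basis_image _ S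
  have hfU : Module.finrank ℂ U = Tc.card := finrank_span_basis_image _ Tc
  have hfK : n ≤ Module.finrank ℂ K + 1 := by
    have h1 := Submodule.finrank_add_finrank_orthogonal (K := (ℂ ∙ w))
    have h2 : Module.finrank ℂ (ℂ ∙ w) ≤ 1 := by
      rcases eq_or_ne w 0 with h | h
      · rw [h, Submodule.span_zero_singleton]
        simp
      · rw [finrank_span_singleton h]
    have h3 : Module.finrank ℂ (EuclideanSpace ℂ (Fin n)) = n := by simp
    have h4 : Module.finrank ℂ ↥K = Module.finrank ℂ ↥(ℂ ∙ w)ᗮ := rfl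
    omega
  have h2pos : 2 ≤ Module.finrank ℂ ↥(W ⊓ U) := by
    have := finrank_inf_ge W U
    omega
  have hpos : 0 < Module.finrank ℂ ↥((W ⊓ U) ⊓ K) := by
    have := finrank_inf_ge (W ⊓ U) K
    omega
  obtain ⟨x, hxWUK, hx0⟩ := exists_ne_zero_of_finrank_pos hpos
  have hxW : x ∈ W := hxWUK.1.1
  have hxU : x ∈ U := hxWUK.1.2
  have hxK : ⟪w, x⟫ = 0 :=
    Submodule.mem_orthogonal_singleton_iff_inner_right.mp hxWUK.2
  have h1 : t * En x < Q N x :=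
    span_quad_gt N hN t S (fun j hj => by simpa [hSdef] using hj) x hxW hx0
  have h2 : Q M x ≤ t * En x :=
    span_quad_le M hM t Tc (fun j hj => by
      have := Finset.mem_filter.mp hj
      exact le_of_not_gt this.2) x hxU
  linarith [hQeq x hxK]

lemma vecMulVec_mulVec' (v : Fin n → ℂ) (y : Fin n → ℂ) :
    vecMulVec v (star v) *ᵥ y = (star v ⬝ᵥ y) • v := by
  ext i
  simp only [mulVec, dotProduct, vecMulVec_apply, Pi.smul_apply, smul_eq_mul, Pi.star_apply,
    Finset.sum_mul]
  exact Finset.sum_congr rfl fun j _ => by ring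

lemma Q_add_smul (M : Matrix (Fin n) (Fin n) ℂ) (c : ℝ) (v : Fin n → ℂ)
    (x : EuclideanSpace ℂ (Fin n)) :
    Q (M + (c : ℂ) • vecMulVec v (star v)) x
      = Q M x + c * Complex.normSq (star v ⬝ᵥ (WithLp.equiv 2 (Fin n → ℂ) x)) := by
  set x' := WithLp.equiv 2 (Fin n → ℂ) x with hx'
  set z := star v ⬝ᵥ x' with hz
  have hP : Matrix.toEuclideanLin (vecMulVec v (star v)) x
      = (WithLp.equiv 2 (Fin n → ℂ)).symm (z • v) := by
    rw [Matrix.toEuclideanLin_apply, vecMulVec_mulVec']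
    rfl
  have hinner : ⟪x, Matrix.toEuclideanLin (vecMulVec v (star v)) x⟫ = (Complex.normSq z : ℂ) := by
    rw [hP, EuclideanSpace.inner_eq_star_dotProduct]
    rw [dotProduct_comm]; change star x' ⬝ᵥ (z • v) = _
    rw [dotProduct_smul]
    have hsv : star x' ⬝ᵥ v = starRingEnd ℂ z := by
      rw [hz]
      simp only [dotProduct, Pi.star_apply, map_sum, RCLike.star_def]
      exact Finset.sum_congr rfl fun j _ => by
        rw [map_mul (starRingEnd ℂ), Complex.conj_conj]; ring
    rw [smul_eq_mul, hsv, Complex.mul_conj]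
  have hsplit : Matrix.toEuclideanLin (M + (c : ℂ) • vecMulVec v (star v)) x
      = Matrix.toEuclideanLin M x + (c : ℂ) • Matrix.toEuclideanLin (vecMulVec v (star v)) x := by
    rw [map_add, LinearEquiv.map_smul]
    rfl
  rw [Q, Q, hsplit, inner_add_right, inner_smul_right, hinner]
  simp [← Complex.ofReal_mul]

end MonotoneRankOne



open MonotoneRankOne in
/-- Let `A` be an `n×n` Hermitian complex matrix, `v ∈ ℂⁿ`, and
`ρ : ℝ → ℝ` nondecreasing and bounded. Then (i) `s ↦ ∑ᵢ ρ(λᵢ(A + s·vv*))` is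
nondecreasing on `ℝ`, and (ii) for all `s ≤ s'`,
`∑ᵢ ρ(λᵢ(A + s'·vv*)) − ∑ᵢ ρ(λᵢ(A + s·vv*)) ≤ sup ρ − inf ρ`. -/
theorem monotone_rank_one_trace (n : ℕ) (A : Matrix (Fin n) (Fin n) ℂ) (v : Fin n → ℂ)
    (hH : ∀ s : ℝ, (A + (s : ℂ) • Matrix.vecMulVec v (star v)).IsHermitian)
    (ρ : ℝ → ℝ) (hmono : Monotone ρ)
    (hbdd_above : BddAbove (Set.range ρ)) (hbdd_below : BddBelow (Set.range ρ)) :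
    (Monotone fun s : ℝ => ∑ i, ρ ((hH s).eigenvalues i)) ∧
    (∀ s s' : ℝ, s ≤ s' →
      (∑ i, ρ ((hH s').eigenvalues i)) - (∑ i, ρ ((hH s).eigenvalues i))
        ≤ sSup (Set.range ρ) - sInf (Set.range ρ)) := by
  have key : ∀ s s' : ℝ, s ≤ s' →
      (∑ i, ρ ((hH s).eigenvalues i) ≤ ∑ i, ρ ((hH s').eigenvalues i)) ∧
      (∑ i, ρ ((hH s').eigenvalues i)) - (∑ i, ρ ((hH s).eigenvalues i))
        ≤ sSup (Set.range ρ) - sInf (Set.range ρ) := by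
    intro s s' hss'
    set P := Matrix.vecMulVec v (star v) with hP
    have hMat : A + (s' : ℂ) • P = (A + (s : ℂ) • P) + ((s' - s : ℝ) : ℂ) • P := by
      have h : ((s : ℝ) : ℂ) + ((s' - s : ℝ) : ℂ) = ((s' : ℝ) : ℂ) := by push_cast; ring
      rw [add_assoc, ← add_smul, h]
    have hQle : ∀ x, Q (A + (s : ℂ) • P) x ≤ Q (A + (s' : ℂ) • P) x := by
      intro x
      rw [hMat, Q_add_smul (A + (s : ℂ) • P)]
      have := mul_nonneg (sub_nonneg.mpr hss')
        (Complex.normSq_nonneg (star v ⬝ᵥ (WithLp.equiv 2 (Fin n → ℂ) x)))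
      linarith
    set w : EuclideanSpace ℂ (Fin n) := (WithLp.equiv 2 (Fin n → ℂ)).symm v with hw
    have hQeq : ∀ x, ⟪w, x⟫ = 0 → Q (A + (s' : ℂ) • P) x ≤ Q (A + (s : ℂ) • P) x := by
      intro x hx
      have hx0 : star v ⬝ᵥ (WithLp.equiv 2 (Fin n → ℂ) x) = 0 := by
        rw [EuclideanSpace.inner_eq_star_dotProduct] at hx
        rw [dotProduct_comm]; simpa [hw] using hx
      rw [hMat, Q_add_smul (A + (s : ℂ) • P), hx0]
      simp
    have hc1 : ∀ t, cnt ((hH s).eigenvalues) t ≤ cnt ((hH s').eigenvalues) t :=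
      fun t => cnt_le_of_quad_le _ _ (hH s) (hH s') hQle t
    have hc2 : ∀ t, cnt ((hH s').eigenvalues) t ≤ cnt ((hH s).eigenvalues) t + 1 :=
      fun t => cnt_le_succ_of_quad_eq _ _ (hH s) (hH s') w hQeq t
    exact sum_rho_comparison ρ hmono hbdd_above hbdd_below _ _ hc1 hc2
  exact ⟨fun s s' h => (key s s' h).1, fun s s' h => (key s s' h).2⟩
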